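/- If G₁,…,G_p are the connected components of a graph G, then the minimum net cost of a linear arrangement of G equals the sum over i of the minimum net cost of a linear arrangement of G_i. -/

import Mathlib

open scoped BigOperators

/-- The length of an edge (as an unordered pair) under a labelling `α`. -/
noncomputable def edgeLen {V : Type*} (α : V → ℕ) : Sym2 V → ℕ :=
  Sym2.lift ⟨fun u v => ((α u : ℤ) - (α v : ℤ)).natAbs,
    fun u v => by simp only []; rw [show (α u:ℤ) - α v = -((α v:ℤ) - α u) by ring, Int.natAbs_neg]⟩

/-- The net cost of a labelling `α` of the graph `G`. -/
noncomputable def netCost {V : Type*} (G : SimpleGraph V) (α : V → ℕ) : ℕ :=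
  ∑ᶠ e ∈ G.edgeSet, (edgeLen α e - 1)

/-- A linear arrangement of `G`, viewed as map to `{1, …, n}`. -/
noncomputable def arr {V : Type*} [Finite V] (α : V ≃ Fin (Nat.card V)) (v : V) : ℕ :=
  (α v : ℕ) + 1

/-- `ola⁺(G)`: minimum net cost of a linear arrangement of `G`. -/
noncomputable def olaPlus {V : Type*} [Finite V] (G : SimpleGraph V) : ℕ :=
  sInf {c : ℕ | ∃ α : V ≃ Fin (Nat.card V), netCost G (arr α) = c}

open Finset

lemma sum_over_edges {V : Type*} [Fintype V] (G : SimpleGraph V) (f : Sym2 V → ℕ) :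
    (∑ᶠ e ∈ G.edgeSet, f e)
      = ∑ᶠ c : G.ConnectedComponent, ∑ᶠ e ∈ (G.induce c.supp).edgeSet,
          f (Sym2.map Subtype.val e) := by
  classical
  haveI : Fintype G.ConnectedComponent := Fintype.ofFinite _
  let E : G.ConnectedComponent → Finset (Sym2 V) := fun c =>
    ((G.induce c.supp).edgeSet.toFinite.toFinset).image (Sym2.map Subtype.val)
  have hmemE : ∀ (c) (e : Sym2 V), e ∈ E c → e ∈ G.edgeSet ∧ ∀ v ∈ e, v ∈ c.supp := by
    intro c e he
    simp only [E, mem_image, Set.Finite.mem_toFinset] at he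
    obtain ⟨e', he', rfl⟩ := he
    induction e' using Sym2.ind with
    | _ u w =>
      rw [Sym2.map_pair_eq]
      rw [SimpleGraph.mem_edgeSet] at he'
      have hadj : G.Adj ↑u ↑w := he'
      refine ⟨hadj, ?_⟩
      intro v hv
      rw [Sym2.mem_iff] at hv
      rcases hv with rfl | rfl
      · exact u.2
      · exact w.2
  have hcover : G.edgeSet.toFinite.toFinset = Finset.univ.biUnion E := by
    ext e
    simp only [Set.Finite.mem_toFinset, mem_biUnion, mem_univ, true_and]
    constructor
    · intro he
      induction e using Sym2.ind with
      | _ u w =>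
        rw [SimpleGraph.mem_edgeSet] at he
        have hw : w ∈ (G.connectedComponentMk u).supp :=
          (SimpleGraph.ConnectedComponent.sound he.symm.reachable)
        refine ⟨G.connectedComponentMk u, ?_⟩
        simp only [E, mem_image, Set.Finite.mem_toFinset]
        refine ⟨s(⟨u, rfl⟩, ⟨w, hw⟩), ?_, ?_⟩
        · rw [SimpleGraph.mem_edgeSet]
          exact he
        · rw [Sym2.map_pair_eq]
    · rintro ⟨c, hc⟩
      exact (hmemE c e hc).1
  have hdisj : ((Finset.univ : Finset G.ConnectedComponent) : Set G.ConnectedComponent).PairwiseDisjoint E := by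
    intro c _ d _ hcd
    refine Finset.disjoint_left.2 fun e hec hed => hcd ?_
    obtain ⟨he, hc⟩ := hmemE c e hec
    obtain ⟨-, hd⟩ := hmemE d e hed
    induction e using Sym2.ind with
    | _ u w =>
      have h1 : u ∈ c.supp := hc u (Sym2.mem_mk_left u w)
      have h2 : u ∈ d.supp := hd u (Sym2.mem_mk_left u w)
      rw [SimpleGraph.ConnectedComponent.mem_supp_iff] at h1 h2
      rw [← h1, ← h2]
  rw [← Set.Finite.coe_toFinset G.edgeSet.toFinite, finsum_mem_coe_finset, hcover,
    Finset.sum_biUnion hdisj, finsum_eq_sum_of_fintype]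
  refine Finset.sum_congr rfl fun c _ => ?_
  rw [← Set.Finite.coe_toFinset (G.induce c.supp).edgeSet.toFinite, finsum_mem_coe_finset,
    Finset.sum_image]
  intro x _ y _ h
  exact Sym2.map.injective Subtype.val_injective h

lemma strictMono_fin_dist {k N : ℕ} (f : Fin k → Fin N) (hf : StrictMono f) :
    ∀ (d : ℕ) (i j : Fin k), (j : ℕ) = (i : ℕ) + d → (f i : ℕ) + d ≤ (f j : ℕ) := by
  intro d
  induction d with
  | zero =>
    intro i j h
    have : i = j := Fin.ext (by omega)
    subst this; omega
  | succ d ih =>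
    intro i j h
    have hj' : (i : ℕ) + d < k := by have := j.isLt; omega
    have h1 := ih i ⟨(i : ℕ) + d, hj'⟩ rfl
    have h2 : f ⟨(i : ℕ) + d, hj'⟩ < f j := hf (by rw [Fin.lt_def]; simp; omega)
    rw [Fin.lt_def] at h2
    omega

lemma exists_compress {V : Type*} [Fintype V] (G : SimpleGraph V)
    (α : V ≃ Fin (Nat.card V)) (c : G.ConnectedComponent) :
    ∃ β : ↥c.supp ≃ Fin (Nat.card ↥c.supp), ∀ u w : ↥c.supp,
      ((β u : ℤ) - (β w : ℤ)).natAbs ≤ ((α ↑u : ℤ) - (α ↑w : ℤ)).natAbs := by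
  classical
  have hinj : Function.Injective (fun u : ↥c.supp => α ↑u) :=
    α.injective.comp Subtype.val_injective
  set s : Finset (Fin (Nat.card V)) := Finset.univ.image (fun u : ↥c.supp => α ↑u) with hs_def
  have hs : s.card = Nat.card ↥c.supp := by
    rw [hs_def, Finset.card_image_of_injective _ hinj, Finset.card_univ,
      Nat.card_eq_fintype_card]
  set oi := s.orderIsoOfFin hs with hoi
  have hmem : ∀ u : ↥c.supp, α ↑u ∈ s := fun u => Finset.mem_image_of_mem _ (mem_univ u)
  set b : ↥c.supp → Fin (Nat.card ↥c.supp) := fun u => oi.symm ⟨α ↑u, hmem u⟩ with hb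
  have hoib : ∀ u, (oi (b u) : Fin (Nat.card V)) = α ↑u := by
    intro u; rw [hb]; simp
    exact congrArg Subtype.val (oi.apply_symm_apply _)
  have binj : Function.Injective b := by
    intro u w h
    apply hinj
    have := congrArg (fun x => ((oi x : ↥s) : Fin (Nat.card V))) h
    simpa only [hoib u, hoib w] using this
  have bbij : Function.Bijective b :=
    (Fintype.bijective_iff_injective_and_card b).2 ⟨binj, by simp [Nat.card_eq_fintype_card]⟩
  refine ⟨Equiv.ofBijective b bbij, ?_⟩
  have key : ∀ u w : ↥c.supp, α ↑u ≤ α ↑w →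
      ((b u : ℕ) ≤ (b w : ℕ) ∧ (b w : ℕ) - (b u : ℕ) ≤ (α ↑w : ℕ) - (α ↑u : ℕ)) := by
    intro u w h
    have hle : b u ≤ b w := by
      rw [hb]
      exact oi.symm.monotone (Subtype.mk_le_mk.2 h)
    refine ⟨hle, ?_⟩
    have hsm : StrictMono (fun i : Fin (Nat.card ↥c.supp) => ((oi i : ↥s) : Fin (Nat.card V))) :=
      fun i j hij => Subtype.coe_lt_coe.2 (oi.strictMono hij)
    have := strictMono_fin_dist _ hsm ((b w : ℕ) - (b u : ℕ)) (b u) (b w) (by omega)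
    simp only [hoib] at this
    omega
  intro u w
  rcases le_total (α ↑u) (α ↑w) with h | h
  · obtain ⟨h1, h2⟩ := key u w h
    have h3 : (α ↑u : ℕ) ≤ (α ↑w : ℕ) := h
    simp only [Equiv.ofBijective_apply]
    omega
  · obtain ⟨h1, h2⟩ := key w u h
    have h3 : (α ↑w : ℕ) ≤ (α ↑u : ℕ) := h
    simp only [Equiv.ofBijective_apply]
    omega

lemma exists_glue {V : Type*} [Fintype V] (G : SimpleGraph V)
    (β : ∀ c : G.ConnectedComponent, ↥c.supp ≃ Fin (Nat.card ↥c.supp)) :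
    ∃ α : V ≃ Fin (Nat.card V), ∀ (c : G.ConnectedComponent) (u w : ↥c.supp),
      (α ↑u : ℤ) - (α ↑w : ℤ) = (β c u : ℤ) - (β c w : ℤ) := by
  classical
  haveI : Fintype G.ConnectedComponent := Fintype.ofFinite _
  set p := Fintype.card G.ConnectedComponent with hp
  set eC := Fintype.equivFin G.ConnectedComponent with heC
  set n : ℕ → ℕ := fun m => if h : m < p then Nat.card ((eC.symm ⟨m, h⟩).supp) else 0 with hn_def
  set off : ℕ → ℕ := fun m => ∑ k ∈ Finset.range m, n k with hoff_def
  have hn : ∀ c, n (eC c) = Nat.card ↥c.supp := by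
    intro c
    rw [hn_def]
    simp only [dif_pos (eC c).isLt, Fin.eta, Equiv.symm_apply_apply]
    exact dif_pos (eC c).isLt
  have off_mono : Monotone off := fun a b h =>
    Finset.sum_le_sum_of_subset (Finset.range_subset_range.2 h)
  have off_succ : ∀ m, off (m + 1) = off m + n m := fun m => Finset.sum_range_succ _ _
  have card_eq : ∑ c : G.ConnectedComponent, Nat.card ↥c.supp = Nat.card V := by
    rw [Nat.card_eq_fintype_card]
    rw [← Fintype.card_congr (Equiv.sigmaFiberEquiv (G.connectedComponentMk))]
    rw [Fintype.card_sigma]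
    refine Finset.sum_congr rfl fun c _ => ?_
    rw [Nat.card_eq_fintype_card]
    exact Fintype.card_congr (Equiv.subtypeEquivRight fun v => Iff.rfl)
  have off_p : off p = Nat.card V := by
    show ∑ k ∈ Finset.range p, n k = Nat.card V
    rw [← Fin.sum_univ_eq_sum_range]
    rw [← card_eq, ← Equiv.sum_comp eC.symm (fun c => Nat.card ↥c.supp)]
    refine Finset.sum_congr rfl fun i _ => ?_
    rw [hn_def]
    simp only [dif_pos i.isLt, Fin.eta]
  set g : V → ℕ := fun v => off (eC (G.connectedComponentMk v)) +
    (β (G.connectedComponentMk v) ⟨v, rfl⟩ : ℕ) with hg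
  have g_spec : ∀ (c : G.ConnectedComponent) (u : ↥c.supp),
      g ↑u = off (eC c) + (β c u : ℕ) := by
    rintro c ⟨u, hu⟩
    have hu' : G.connectedComponentMk u = c := hu
    subst hu'
    rfl
  have g_lt : ∀ v, g v < Nat.card V := by
    intro v
    set c := G.connectedComponentMk v
    have h1 : g v < off (eC c) + n (eC c) := by
      rw [hn c, hg]
      exact Nat.add_lt_add_left (β c ⟨v, rfl⟩).isLt _
    calc g v < off (eC c) + n (eC c) := h1
      _ = off ((eC c : ℕ) + 1) := (off_succ _).symm
      _ ≤ off p := off_mono (eC c).isLt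
      _ = Nat.card V := off_p
  have g_big : ∀ (a b : V), ((eC (G.connectedComponentMk a)) : ℕ) < eC (G.connectedComponentMk b) →
      g a < g b := by
    intro a b h
    calc g a < off (eC (G.connectedComponentMk a)) + n (eC (G.connectedComponentMk a)) := by
          rw [hn, hg]; exact Nat.add_lt_add_left (β _ ⟨a, rfl⟩).isLt _
      _ = off ((eC (G.connectedComponentMk a) : ℕ) + 1) := (off_succ _).symm
      _ ≤ off (eC (G.connectedComponentMk b)) := off_mono h
      _ ≤ g b := Nat.le_add_right _ _
  have g_inj : Function.Injective g := by
    intro u v h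
    rcases lt_trichotomy ((eC (G.connectedComponentMk u)) : ℕ) (eC (G.connectedComponentMk v))
      with hlt | heq | hgt
    · exact absurd h (Nat.ne_of_lt (g_big u v hlt))
    · have hcc : G.connectedComponentMk u = G.connectedComponentMk v :=
        eC.injective (Fin.ext heq)
      set c := G.connectedComponentMk u with hc
      have hv : v ∈ c.supp := hcc.symm
      have h1 : g u = off (eC c) + (β c ⟨u, rfl⟩ : ℕ) := g_spec c ⟨u, rfl⟩
      have h2 : g v = off (eC c) + (β c ⟨v, hv⟩ : ℕ) := g_spec c ⟨v, hv⟩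
      rw [h1, h2] at h
      have h3 : β c ⟨u, rfl⟩ = β c ⟨v, hv⟩ := Fin.ext (by omega)
      have := (β c).injective h3
      exact congrArg Subtype.val this
    · exact absurd h.symm (Nat.ne_of_lt (g_big v u hgt))
  set α : V ≃ Fin (Nat.card V) :=
    Equiv.ofBijective (fun v => (⟨g v, g_lt v⟩ : Fin (Nat.card V)))
      ((Fintype.bijective_iff_injective_and_card _).2
        ⟨fun a b hab => g_inj (congrArg Fin.val hab), by simp [Nat.card_eq_fintype_card]⟩) with hα
  refine ⟨α, fun c u w => ?_⟩
  have h1 : (α ↑u : ℕ) = g ↑u := rfl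
  have h2 : (α ↑w : ℕ) = g ↑w := rfl
  have h3 := g_spec c u
  have h4 := g_spec c w
  have : (α ↑u : ℕ) = off (eC c) + (β c u : ℕ) := by rw [h1, h3]
  have : (α ↑w : ℕ) = off (eC c) + (β c w : ℕ) := by rw [h2, h4]
  omega

lemma arr_diff {V : Type*} [Finite V] (α : V ≃ Fin (Nat.card V)) (u v : V) :
    ((arr α u : ℤ) - arr α v) = (α u : ℤ) - (α v : ℤ) := by
  simp only [arr]; push_cast; ring

/-- ola⁺ of a graph equals the sum of ola⁺ over its connected components. -/
theorem olaPlus_eq_sum_components {V : Type*} [Finite V] (G : SimpleGraph V) :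
    olaPlus G = ∑ᶠ c : G.ConnectedComponent, olaPlus (G.induce c.supp) := by
  classical
  cases nonempty_fintype V
  haveI : Fintype G.ConnectedComponent := Fintype.ofFinite _
  -- pointwise edgeLen lemmas
  have edgeLen_eq : ∀ (α : V ≃ Fin (Nat.card V))
      (β : ∀ c : G.ConnectedComponent, ↥c.supp ≃ Fin (Nat.card ↥c.supp)),
      (∀ (c : G.ConnectedComponent) (u w : ↥c.supp),
        (α ↑u : ℤ) - (α ↑w : ℤ) = (β c u : ℤ) - (β c w : ℤ)) →
      ∀ (c : G.ConnectedComponent) (e : Sym2 ↥c.supp),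
        edgeLen (arr α) (Sym2.map Subtype.val e) = edgeLen (arr (β c)) e := by
    intro α β h c e
    induction e using Sym2.ind with
    | _ u w =>
      rw [Sym2.map_pair_eq]
      show ((arr α ↑u : ℤ) - arr α ↑w).natAbs = ((arr (β c) u : ℤ) - arr (β c) w).natAbs
      rw [arr_diff, arr_diff, h c u w]
  have edgeLen_le : ∀ (α : V ≃ Fin (Nat.card V)) (c : G.ConnectedComponent)
      (β : ↥c.supp ≃ Fin (Nat.card ↥c.supp)),
      (∀ u w : ↥c.supp, ((β u : ℤ) - (β w : ℤ)).natAbs ≤ ((α ↑u : ℤ) - (α ↑w : ℤ)).natAbs) →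
      ∀ e : Sym2 ↥c.supp,
        edgeLen (arr (β)) e ≤ edgeLen (arr α) (Sym2.map Subtype.val e) := by
    intro α c β h e
    induction e using Sym2.ind with
    | _ u w =>
      rw [Sym2.map_pair_eq]
      show ((arr (β) u : ℤ) - arr (β) w).natAbs ≤ ((arr α ↑u : ℤ) - arr α ↑w).natAbs
      rw [arr_diff, arr_diff]
      exact h u w
  refine le_antisymm ?_ ?_
  · -- olaPlus G ≤ sum
    have hch : ∀ c : G.ConnectedComponent,
        ∃ β : ↥c.supp ≃ Fin (Nat.card ↥c.supp),
          netCost (G.induce c.supp) (arr β) = olaPlus (G.induce c.supp) := by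
      intro c
      have h1 : ({x : ℕ | ∃ β : ↥c.supp ≃ Fin (Nat.card ↥c.supp),
          netCost (G.induce c.supp) (arr β) = x}).Nonempty := ⟨_, Finite.equivFin _, rfl⟩
      exact Nat.sInf_mem h1
    choose β hβ using hch
    obtain ⟨α, hα⟩ := exists_glue G β
    have hcost : netCost G (arr α) = ∑ᶠ c : G.ConnectedComponent, olaPlus (G.induce c.supp) := by
      rw [netCost, sum_over_edges G (fun e => edgeLen (arr α) e - 1)]
      refine finsum_congr fun c => ?_
      rw [← hβ c, netCost]
      exact finsum_mem_congr rfl fun e he => by rw [edgeLen_eq α β hα c e]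
    exact hcost ▸ Nat.sInf_le ⟨α, rfl⟩
  · -- sum ≤ olaPlus G
    have hmem : ∃ α : V ≃ Fin (Nat.card V), netCost G (arr α) = olaPlus G := by
      have h1 : ({x : ℕ | ∃ α : V ≃ Fin (Nat.card V),
          netCost G (arr α) = x}).Nonempty := ⟨_, Finite.equivFin V, rfl⟩
      exact Nat.sInf_mem h1
    obtain ⟨α, hα⟩ := hmem
    choose β hβ using exists_compress G α
    have step1 : ∑ᶠ c : G.ConnectedComponent, olaPlus (G.induce c.supp)
        ≤ ∑ᶠ c : G.ConnectedComponent, netCost (G.induce c.supp) (arr (β c)) := by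
      rw [finsum_eq_sum_of_fintype, finsum_eq_sum_of_fintype]
      exact Finset.sum_le_sum fun c _ => Nat.sInf_le ⟨β c, rfl⟩
    have step2 : ∑ᶠ c : G.ConnectedComponent, netCost (G.induce c.supp) (arr (β c))
        ≤ netCost G (arr α) := by
      rw [netCost, sum_over_edges G (fun e => edgeLen (arr α) e - 1),
        finsum_eq_sum_of_fintype, finsum_eq_sum_of_fintype]
      refine Finset.sum_le_sum fun c _ => ?_
      rw [netCost, ← Set.Finite.coe_toFinset (G.induce c.supp).edgeSet.toFinite,
        finsum_mem_coe_finset, finsum_mem_coe_finset]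
      refine Finset.sum_le_sum fun e _ => ?_
      exact Nat.sub_le_sub_right (edgeLen_le α c (β c) (hβ c) e) 1
    rw [← hα]
    exact le_trans step1 step2
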